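/- For 0 ≤ q ≤ 1 let K_q = ((1+q)/2) |Φ_00⟩⟨Φ_00| + ((1−q)/2) |Φ_01⟩⟨Φ_01| be the Choi state of the qubit dephasing channel D^ph_q. Then for 0 ≤ q, q' ≤ 1: K_{q'} lies in the convex hull of { (U ⊗ V) K_q (U ⊗ V)† : U, V ∈ U(2) } (an allowed operation maps D^ph_q to D^ph_{q'}) if and only if q' ≤ q. -/

import Mathlib

open Matrix Kronecker

noncomputable section

/-- The qubit discrete Weyl operators `W_nm = Σ_c (−1)^{mc} |n+c⟩⟨c|`. -/
def Wq (n m : ZMod 2) : Matrix (ZMod 2) (ZMod 2) ℂ :=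
  Matrix.of fun r c => if r = n + c then (-1 : ℂ) ^ (m.val * c.val) else 0

/-- The qubit Bell basis vector `|Φ_nm⟩ = (I ⊗ W_nm)|Φ_00⟩`. -/
def bell (n m : ZMod 2) : ZMod 2 × ZMod 2 → ℂ :=
  fun p => ((Real.sqrt 2 : ℝ) : ℂ)⁻¹ * Wq n m p.2 p.1

/-- The Bell projector `|Φ_nm⟩⟨Φ_nm|`. -/
def bellProj (n m : ZMod 2) : Matrix (ZMod 2 × ZMod 2) (ZMod 2 × ZMod 2) ℂ :=
  Matrix.of fun p q => bell n m p * (starRingEnd ℂ) (bell n m q)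

/-- The set `{ (U ⊗ V) J (U ⊗ V)† : U, V ∈ U(2) }`. -/
def allowedSet (J : Matrix (ZMod 2 × ZMod 2) (ZMod 2 × ZMod 2) ℂ) :
    Set (Matrix (ZMod 2 × ZMod 2) (ZMod 2 × ZMod 2) ℂ) :=
  { K | ∃ U ∈ Matrix.unitaryGroup (ZMod 2) ℂ, ∃ V ∈ Matrix.unitaryGroup (ZMod 2) ℂ,
      K = (U ⊗ₖ V) * J * (U ⊗ₖ V)ᴴ }

/-- The Choi state `J_s = s |Φ_00⟩⟨Φ_00| + ((1−s)/4) I₄` of the qubit depolarising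
channel `D^pol_s`. -/
def Jdep (s : ℝ) : Matrix (ZMod 2 × ZMod 2) (ZMod 2 × ZMod 2) ℂ :=
  s • bellProj 0 0 + ((1 - s) / 4) • (1 : Matrix (ZMod 2 × ZMod 2) (ZMod 2 × ZMod 2) ℂ)

/-- The Choi state `K_q = ((1+q)/2)|Φ_00⟩⟨Φ_00| + ((1−q)/2)|Φ_01⟩⟨Φ_01|` of the qubit
dephasing channel `D^ph_q`. -/
def Kdeph (q : ℝ) : Matrix (ZMod 2 × ZMod 2) (ZMod 2 × ZMod 2) ℂ :=
  ((1 + q) / 2) • bellProj 0 0 + ((1 - q) / 2) • bellProj 0 1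

abbrev Q2 := ZMod 2 × ZMod 2

lemma sum_zmod2 {M : Type*} [AddCommMonoid M] (f : ZMod 2 → M) : ∑ i, f i = f 0 + f 1 := by
  have : (Finset.univ : Finset (ZMod 2)) = {0, 1} := by decide
  rw [this, Finset.sum_pair (by decide)]

lemma sum_q2 {M : Type*} [AddCommMonoid M] (f : Q2 → M) :
    ∑ p, f p = f (0,0) + f (0,1) + f (1,0) + f (1,1) := by
  rw [Fintype.sum_prod_type, sum_zmod2 (fun a => ∑ b, f (a, b)), sum_zmod2 (fun b => f (0, b)),
    sum_zmod2 (fun b => f (1, b))]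
  simp only [add_assoc]

lemma zmod2_cases : ∀ x : ZMod 2, x = 0 ∨ x = 1 := by decide

lemma q2_cases : ∀ p : Q2, p = (0,0) ∨ p = (0,1) ∨ p = (1,0) ∨ p = (1,1) := by decide

lemma sqrt2_inv_mul : (((Real.sqrt 2 : ℝ) : ℂ))⁻¹ * ((Real.sqrt 2 : ℝ) : ℂ)⁻¹ = 1/2 := by
  rw [← Complex.ofReal_inv, ← Complex.ofReal_mul, ← mul_inv,
    Real.mul_self_sqrt (by norm_num)]
  norm_num

lemma star_sqrt2_inv : (starRingEnd ℂ) ((Real.sqrt 2 : ℝ) : ℂ)⁻¹ = ((Real.sqrt 2 : ℝ) : ℂ)⁻¹ := by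
  rw [← Complex.ofReal_inv, Complex.conj_ofReal]

lemma bell_dot_bell (n m n' m' : ZMod 2) :
    star (bell n m) ⬝ᵥ bell n' m' = if n = n' ∧ m = m' then 1 else 0 := by
  fin_cases n <;> fin_cases m <;> fin_cases n' <;> fin_cases m' <;>
    · simp only [dotProduct, Pi.star_apply, RCLike.star_def]
      rw [sum_q2]
      simp (config := { decide := true }) [bell, Wq, _root_.map_mul, star_sqrt2_inv,
        show ZMod.val (1:ZMod 2) = 1 by decide]
      try norm_num [sqrt2_inv_mul]
      all_goals grind

lemma outer_conj (A : Matrix Q2 Q2 ℂ) (v : Q2 → ℂ) :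
    A * (Matrix.of fun p q => v p * (starRingEnd ℂ) (v q)) * Aᴴ =
    Matrix.of fun p q => (A *ᵥ v) p * (starRingEnd ℂ) ((A *ᵥ v) q) := by
  ext p r
  simp only [mul_apply, conjTranspose_apply, Matrix.of_apply, mulVec, dotProduct,
    map_sum, _root_.map_mul, Finset.sum_mul, Finset.mul_sum]
  refine Finset.sum_congr rfl fun j _ => Finset.sum_congr rfl fun i _ => ?_
  rw [RCLike.star_def]; ring

lemma conj_bellProj (A : Matrix Q2 Q2 ℂ) (n m : ZMod 2) :
    A * bellProj n m * Aᴴ =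
    Matrix.of fun p q => (A *ᵥ bell n m) p * (starRingEnd ℂ) ((A *ᵥ bell n m) q) :=
  outer_conj A (bell n m)

lemma quad_proj (n m : ZMod 2) (w : Q2 → ℂ) :
    star w ⬝ᵥ (bellProj n m *ᵥ w) =
      (starRingEnd ℂ) (star (bell n m) ⬝ᵥ w) * (star (bell n m) ⬝ᵥ w) := by
  have h1 : bellProj n m *ᵥ w = fun p => bell n m p * (star (bell n m) ⬝ᵥ w) := by
    funext p
    simp only [bellProj, mulVec, dotProduct, Matrix.of_apply, Pi.star_apply, RCLike.star_def,
      Finset.mul_sum]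
    exact Finset.sum_congr rfl fun q _ => by ring
  rw [h1]
  simp only [dotProduct, Pi.star_apply, RCLike.star_def, map_sum, _root_.map_mul,
    Finset.sum_mul]
  refine Finset.sum_congr rfl fun p _ => ?_
  rw [Complex.conj_conj]
  ring

lemma quad_conj (A K : Matrix Q2 Q2 ℂ) (b : Q2 → ℂ) :
    star b ⬝ᵥ ((A * K * Aᴴ) *ᵥ b) = star (Aᴴ *ᵥ b) ⬝ᵥ (K *ᵥ (Aᴴ *ᵥ b)) := by
  rw [star_mulVec, conjTranspose_conjTranspose, ← mulVec_mulVec, ← mulVec_mulVec,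
    dotProduct_mulVec]

lemma kron_conjT (U V : Matrix (ZMod 2) (ZMod 2) ℂ) : (U ⊗ₖ V)ᴴ = Uᴴ ⊗ₖ Vᴴ := by
  ext p r
  simp [conjTranspose_apply, kroneckerMap_apply, mul_comm]

lemma Wq01_unitary : Wq 0 1 ∈ Matrix.unitaryGroup (ZMod 2) ℂ := by
  rw [Matrix.mem_unitaryGroup_iff]
  ext i j
  rcases zmod2_cases i with rfl | rfl <;> rcases zmod2_cases j with rfl | rfl <;>
    · rw [Matrix.mul_apply, sum_zmod2]
      simp (config := { decide := true }) [Wq, Matrix.one_apply, Matrix.star_apply,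
        show ZMod.val (1:ZMod 2) = 1 by decide]

lemma swap_bell (m : ZMod 2) :
    ((1 : Matrix (ZMod 2) (ZMod 2) ℂ) ⊗ₖ Wq 0 1) *ᵥ bell 0 m = bell 0 (m + 1) := by
  rcases zmod2_cases m with rfl | rfl <;>
    · funext p
      rw [mulVec, dotProduct, sum_q2]
      rcases q2_cases p with rfl | rfl | rfl | rfl <;>
        · simp (config := { decide := true }) [kroneckerMap_apply, Matrix.one_apply, bell, Wq,
            show ZMod.val (1:ZMod 2) = 1 by decide]
          try ring

lemma sub_proj : (1 : Matrix Q2 Q2 ℂ) - bellProj 0 0 - bellProj 0 1 =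
    Matrix.of (fun p r : Q2 => if p = r ∧ p.1 ≠ p.2 then 1 else 0) := by
  ext p r
  rcases q2_cases p with rfl | rfl | rfl | rfl <;> rcases q2_cases r with rfl | rfl | rfl | rfl <;>
    · simp (config := { decide := true }) [bellProj, bell, Wq, Matrix.one_apply, _root_.map_mul,
        star_sqrt2_inv, show ZMod.val (1:ZMod 2) = 1 by decide, Matrix.sub_apply]
      try norm_num [sqrt2_inv_mul]

lemma norm_w (A : Matrix Q2 Q2 ℂ) (hA : A * Aᴴ = 1) :
    star (Aᴴ *ᵥ bell 0 0) ⬝ᵥ (Aᴴ *ᵥ bell 0 0) = 1 := by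
  have h := quad_conj A 1 (bell 0 0)
  rw [mul_one, hA, one_mulVec, one_mulVec] at h
  rw [← h]
  simpa using bell_dot_bell 0 0 0 0

lemma diag_pos (w : Q2 → ℂ) :
    0 ≤ (star w ⬝ᵥ (((1 : Matrix Q2 Q2 ℂ) - bellProj 0 0 - bellProj 0 1) *ᵥ w)).re := by
  rw [sub_proj]
  have h1 : (Matrix.of (fun p r : Q2 => if p = r ∧ p.1 ≠ p.2 then (1:ℂ) else 0)) *ᵥ w =
      fun p => if p.1 ≠ p.2 then w p else 0 := by
    funext p
    rw [mulVec, dotProduct, sum_q2]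
    rcases q2_cases p with rfl | rfl | rfl | rfl <;> simp (config := { decide := true }) []
  rw [h1, dotProduct, sum_q2]
  simp (config := { decide := true }) only [Pi.star_apply, RCLike.star_def]
  simp only [if_true, if_false, mul_zero, add_zero, zero_add]
  rw [← Complex.normSq_eq_conj_mul_self, ← Complex.normSq_eq_conj_mul_self,
    ← Complex.ofReal_add, Complex.ofReal_re]
  exact add_nonneg (Complex.normSq_nonneg _) (Complex.normSq_nonneg _)

lemma phi_bound (q : ℝ) (hq0 : 0 ≤ q) (hq1 : q ≤ 1) (M : Matrix Q2 Q2 ℂ)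
    (hM : M ∈ allowedSet (Kdeph q)) :
    (star (bell 0 0) ⬝ᵥ (M *ᵥ bell 0 0)).re ≤ (1 + q) / 2 := by
  obtain ⟨U, hU, V, hV, rfl⟩ := hM
  set A := U ⊗ₖ V with hAdef
  have hA : A * Aᴴ = 1 := by
    rw [hAdef, kron_conjT, ← mul_kronecker_mul,
      show U * Uᴴ = 1 from Matrix.mem_unitaryGroup_iff.mp hU,
      show V * Vᴴ = 1 from Matrix.mem_unitaryGroup_iff.mp hV, one_kronecker_one]
  set w := Aᴴ *ᵥ bell 0 0 with hw
  rw [quad_conj]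
  rw [show Kdeph q *ᵥ w = ((1+q)/2) • (bellProj 0 0 *ᵥ w) + ((1-q)/2) • (bellProj 0 1 *ᵥ w) by
    rw [Kdeph, add_mulVec, smul_mulVec, smul_mulVec]]
  rw [dotProduct_add, dotProduct_smul, dotProduct_smul, quad_proj, quad_proj]
  set a0 := star (bell 0 0) ⬝ᵥ w
  set a1 := star (bell 0 1) ⬝ᵥ w
  rw [← Complex.normSq_eq_conj_mul_self, ← Complex.normSq_eq_conj_mul_self]
  have hsum : Complex.normSq a0 + Complex.normSq a1 ≤ 1 := by
    have h2 := diag_pos w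
    rw [sub_mulVec, sub_mulVec, dotProduct_sub, dotProduct_sub, one_mulVec, norm_w A hA,
      quad_proj, quad_proj, ← Complex.normSq_eq_conj_mul_self,
      ← Complex.normSq_eq_conj_mul_self] at h2
    have : ((1 : ℂ) - ↑(Complex.normSq a0) - ↑(Complex.normSq a1)).re
        = 1 - Complex.normSq a0 - Complex.normSq a1 := by
      simp
    rw [this] at h2
    linarith
  have h0 := Complex.normSq_nonneg a0
  have h1' := Complex.normSq_nonneg a1
  have : (((1+q)/2 : ℝ) • (↑(Complex.normSq a0) : ℂ)
      + ((1-q)/2 : ℝ) • (↑(Complex.normSq a1) : ℂ)).re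
      = (1+q)/2 * Complex.normSq a0 + (1-q)/2 * Complex.normSq a1 := by
    simp [Complex.real_smul, ← Complex.ofReal_mul, ← Complex.ofReal_add]
  rw [this]
  nlinarith

lemma phi_Kdeph (r : ℝ) :
    (star (bell 0 0) ⬝ᵥ (Kdeph r *ᵥ bell 0 0)).re = (1 + r) / 2 := by
  rw [Kdeph, add_mulVec, smul_mulVec, smul_mulVec, dotProduct_add,
    dotProduct_smul, dotProduct_smul, quad_proj, quad_proj, bell_dot_bell, bell_dot_bell]
  norm_num


/-- An allowed operation maps the qubit dephasing channel `D^ph_q` to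
`D^ph_{q'}` if and only if `q' ≤ q`. -/
theorem dephasing_to_dephasing (q q' : ℝ)
    (hq0 : 0 ≤ q) (hq1 : q ≤ 1) (hq'0 : 0 ≤ q') (hq'1 : q' ≤ 1) :
    Kdeph q' ∈ convexHull ℝ (allowedSet (Kdeph q)) ↔ q' ≤ q := by
  constructor
  · intro h
    have hsub : convexHull ℝ (allowedSet (Kdeph q)) ⊆
        {M : Matrix Q2 Q2 ℂ | (star (bell 0 0) ⬝ᵥ (M *ᵥ bell 0 0)).re ≤ (1 + q) / 2} := by
      apply convexHull_min
      · intro M hM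
        exact phi_bound q hq0 hq1 M hM
      · intro Mx hMx My hMy a b ha hb hab
        simp only [Set.mem_setOf_eq] at hMx hMy ⊢
        have heq : star (bell 0 0) ⬝ᵥ ((a • Mx + b • My) *ᵥ bell 0 0)
            = a • (star (bell 0 0) ⬝ᵥ (Mx *ᵥ bell 0 0))
              + b • (star (bell 0 0) ⬝ᵥ (My *ᵥ bell 0 0)) := by
          rw [add_mulVec, smul_mulVec, smul_mulVec, dotProduct_add,
            dotProduct_smul, dotProduct_smul]
        rw [heq, Complex.add_re, Complex.real_smul, Complex.real_smul]
        rw [show ∀ (r : ℝ) (z : ℂ), ((r : ℂ) * z).re = r * z.re from fun r z => by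
          simp [Complex.mul_re], show ∀ (r : ℝ) (z : ℂ), ((r : ℂ) * z).re = r * z.re from
          fun r z => by simp [Complex.mul_re]]
        nlinarith [mul_le_mul_of_nonneg_left hMx ha, mul_le_mul_of_nonneg_left hMy hb]
    have hval := hsub h
    simp only [Set.mem_setOf_eq, phi_Kdeph] at hval
    linarith
  · intro hle
    rcases eq_or_lt_of_le hq0 with hq | hqpos
    · have hq'eq : q' = q := le_antisymm (hq ▸ hle) (hq ▸ hq'0)
      rw [hq'eq]
      apply subset_convexHull
      exact ⟨1, one_mem _, 1, one_mem _, by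
        rw [one_kronecker_one, conjTranspose_one, one_mul, mul_one]⟩
    · set t : ℝ := (q + q') / (2 * q) with ht
      have ht0 : 0 ≤ t := by positivity
      have ht1 : t ≤ 1 := by
        rw [ht, div_le_one (by linarith)]
        linarith
      have hM1 : Kdeph q ∈ allowedSet (Kdeph q) :=
        ⟨1, one_mem _, 1, one_mem _, by
          rw [one_kronecker_one, conjTranspose_one, one_mul, mul_one]⟩
      have hM2 : ((1 : Matrix (ZMod 2) (ZMod 2) ℂ) ⊗ₖ Wq 0 1) * Kdeph q *
          ((1 : Matrix (ZMod 2) (ZMod 2) ℂ) ⊗ₖ Wq 0 1)ᴴ ∈ allowedSet (Kdeph q) :=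
        ⟨1, one_mem _, Wq 0 1, Wq01_unitary, rfl⟩
      have hM2eq : ((1 : Matrix (ZMod 2) (ZMod 2) ℂ) ⊗ₖ Wq 0 1) * Kdeph q *
          ((1 : Matrix (ZMod 2) (ZMod 2) ℂ) ⊗ₖ Wq 0 1)ᴴ
          = ((1 + q) / 2) • bellProj 0 1 + ((1 - q) / 2) • bellProj 0 0 := by
        rw [Kdeph, mul_add, add_mul, Matrix.mul_smul, Matrix.smul_mul, Matrix.mul_smul,
          Matrix.smul_mul, conj_bellProj, conj_bellProj, swap_bell, swap_bell]
        norm_num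
        rfl
      have hcombo : Kdeph q' = t • Kdeph q + (1 - t) •
          (((1 : Matrix (ZMod 2) (ZMod 2) ℂ) ⊗ₖ Wq 0 1) * Kdeph q *
            ((1 : Matrix (ZMod 2) (ZMod 2) ℂ) ⊗ₖ Wq 0 1)ᴴ) := by
        rw [hM2eq, Kdeph, Kdeph, smul_add, smul_add, smul_smul, smul_smul, smul_smul,
          smul_smul]
        have e1 : (1 + q') / 2 = t * ((1 + q) / 2) + (1 - t) * ((1 - q) / 2) := by
          rw [ht]; field_simp; ring
        have e2 : (1 - q') / 2 = t * ((1 - q) / 2) + (1 - t) * ((1 + q) / 2) := by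
          rw [ht]; field_simp; ring
        rw [e1, e2, add_smul, add_smul]
        abel
      rw [hcombo]
      exact (convex_convexHull ℝ _) (subset_convexHull ℝ _ hM1) (subset_convexHull ℝ _ hM2)
        ht0 (by linarith) (by ring)

end
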